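/- Let $S \subset \mathbb{R}$ be bounded of positive measure and suppose $\Lambda = \{\lambda_n\} \subset \mathbb{R}$ is such that $\{e^{2\pi i \lambda_n x}\}$ is a Riesz basis for $L^2(S)$. Then there exists $\mu > 0$ (depending on $S$ and $\Lambda$) such that any sequence $\Gamma = \{\gamma_n\}$ with $|\lambda_n - \gamma_n| < \mu$ for all $n$ also yields a Riesz basis $\{e^{2\pi i\gamma_n x}\}$ for $L^2(S)$. -/

import Mathlib

open MeasureTheory Real



noncomputable def expFun (l x : ℝ) : ℂ := Complex.exp (2 * π * Complex.I * l * x)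

lemma norm_expFun (l x : ℝ) : ‖expFun l x‖ = 1 := by
  have : (2 * π * Complex.I * l * x) = ((2 * π * l * x : ℝ) : ℂ) * Complex.I := by
    push_cast; ring
  rw [expFun, this]
  exact Complex.norm_exp_ofReal_mul_I _

noncomputable def pwN (S : Set ℝ) (f : ℝ → ℂ) : ℝ := Real.sqrt (∫ x in S, ‖f x‖ ^ 2)

lemma pwN_nonneg (S : Set ℝ) (f : ℝ → ℂ) : 0 ≤ pwN S f := Real.sqrt_nonneg _

lemma pw_int_nonneg (S : Set ℝ) (f : ℝ → ℂ) : 0 ≤ ∫ x in S, ‖f x‖ ^ 2 :=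
  integral_nonneg fun x => by positivity

lemma pwN_sq (S : Set ℝ) (f : ℝ → ℂ) : pwN S f ^ 2 = ∫ x in S, ‖f x‖ ^ 2 :=
  Real.sq_sqrt (pw_int_nonneg S f)

lemma pwN_eq_eLpNorm (S : Set ℝ) {f : ℝ → ℂ} (hf : MemLp f 2 (volume.restrict S)) :
    pwN S f = (eLpNorm f 2 (volume.restrict S)).toReal := by
  rw [hf.eLpNorm_eq_integral_rpow_norm (by norm_num) (by norm_num)]
  have h2 : (2 : ENNReal).toReal = 2 := by norm_num
  rw [h2]
  have : (∫ a, ‖f a‖ ^ (2:ℝ) ∂(volume.restrict S)) = ∫ x in S, ‖f x‖ ^ 2 := by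
    apply integral_congr_ae; filter_upwards with a
    rw [← Real.rpow_natCast ‖f a‖ 2]; norm_num
  rw [this, ENNReal.toReal_ofReal (by positivity), pwN, Real.sqrt_eq_rpow]
  norm_num


lemma pw_memℒp_of_continuous {S : Set ℝ} (hSm : MeasurableSet S)
    (hSb : Bornology.IsBounded S) {f : ℝ → ℂ} (hf : Continuous f) :
    MemLp f 2 (volume.restrict S) := by
  haveI : IsFiniteMeasure (volume.restrict S) :=
    ⟨by rw [Measure.restrict_apply_univ]; exact hSb.measure_lt_top⟩
  obtain ⟨r, hr⟩ := hSb.subset_closedBall 0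
  obtain ⟨C, hC⟩ := (isCompact_closedBall (0:ℝ) r).exists_bound_of_continuousOn hf.continuousOn
  refine MemLp.of_bound hf.aestronglyMeasurable C ?_
  rw [ae_restrict_iff' hSm]
  filter_upwards with x hx
  exact hC x (hr hx)

lemma pw_integrable_sq {S : Set ℝ} {f : ℝ → ℂ} (hf : MemLp f 2 (volume.restrict S)) :
    IntegrableOn (fun x => ‖f x‖ ^ 2) S volume := by
  have := hf.integrable_norm_rpow (by norm_num) (by norm_num)
  have h2 : (2 : ENNReal).toReal = 2 := by norm_num
  rw [h2] at this
  apply this.congr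
  filter_upwards with a
  rw [← Real.rpow_natCast ‖f a‖ 2]; norm_num



lemma pwN_add_le (S : Set ℝ) {f g : ℝ → ℂ} (hf : MemLp f 2 (volume.restrict S))
    (hg : MemLp g 2 (volume.restrict S)) :
    pwN S (fun x => f x + g x) ≤ pwN S f + pwN S g := by
  have hadd : MemLp (fun x => f x + g x) 2 (volume.restrict S) := hf.add hg
  rw [pwN_eq_eLpNorm S hadd, pwN_eq_eLpNorm S hf, pwN_eq_eLpNorm S hg]
  have h := eLpNorm_add_le hf.1 hg.1 (by norm_num : (1:ENNReal) ≤ 2)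
  have : (eLpNorm (f + g) 2 (volume.restrict S)).toReal
      ≤ (eLpNorm f 2 (volume.restrict S) + eLpNorm g 2 (volume.restrict S)).toReal :=
    ENNReal.toReal_mono (ENNReal.add_ne_top.mpr ⟨hf.2.ne, hg.2.ne⟩) h
  rwa [ENNReal.toReal_add hf.2.ne hg.2.ne] at this

lemma pwN_sub_le (S : Set ℝ) {f g h : ℝ → ℂ} (hf : MemLp f 2 (volume.restrict S))
    (hg : MemLp g 2 (volume.restrict S)) (hh : MemLp h 2 (volume.restrict S)) :
    pwN S (fun x => f x - h x) ≤ pwN S (fun x => f x - g x) + pwN S (fun x => g x - h x) := by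
  have : (fun x => f x - h x) = fun x => (f x - g x) + (g x - h x) := by funext x; ring
  rw [this]
  exact pwN_add_le S (hf.sub hg) (hg.sub hh)

lemma pwN_neg (S : Set ℝ) (f g : ℝ → ℂ) :
    pwN S (fun x => f x - g x) = pwN S (fun x => g x - f x) := by
  unfold pwN; congr 1; apply integral_congr_ae; filter_upwards with x; rw [norm_sub_rev]

lemma pwN_sum_le (S : Set ℝ) {ι : Type*} (t : Finset ι) (f : ι → ℝ → ℂ)
    (hf : ∀ i ∈ t, MemLp (f i) 2 (volume.restrict S)) :
    pwN S (fun x => ∑ i ∈ t, f i x) ≤ ∑ i ∈ t, pwN S (f i) := by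
  have heq : (∑ i ∈ t, f i) = fun x => ∑ i ∈ t, f i x := by funext x; simp
  have hsum : MemLp (fun x => ∑ i ∈ t, f i x) 2 (volume.restrict S) := by
    rw [← heq]; exact memLp_finset_sum' t hf
  rw [pwN_eq_eLpNorm S hsum]
  have h := eLpNorm_sum_le (fun i hi => (hf i hi).1) (by norm_num : (1:ENNReal) ≤ 2)
  rw [heq] at h
  calc (eLpNorm (fun x => ∑ i ∈ t, f i x) 2 (volume.restrict S)).toReal
      ≤ (∑ i ∈ t, eLpNorm (f i) 2 (volume.restrict S)).toReal :=
        ENNReal.toReal_mono (by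
          rw [← lt_top_iff_ne_top]
          exact ENNReal.sum_lt_top.mpr fun i hi => (hf i hi).2) h
    _ = ∑ i ∈ t, (eLpNorm (f i) 2 (volume.restrict S)).toReal :=
        ENNReal.toReal_sum fun i hi => (hf i hi).2.ne
    _ = ∑ i ∈ t, pwN S (f i) := by
        refine Finset.sum_congr rfl fun i hi => ?_
        rw [pwN_eq_eLpNorm S (hf i hi)]


lemma continuous_expFun (l : ℝ) : Continuous (expFun l) := by
  unfold expFun; fun_prop

lemma pw_two_pow_le_factorial (k : ℕ) : (2:ℝ)^(k-1) ≤ k.factorial := by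
  induction k with
  | zero => simp
  | succ n ih =>
    cases n with
    | zero => simp [Nat.factorial]
    | succ j =>
      have h1 : (2:ℝ)^(j+1+1-1) = 2 * 2^(j+1-1) := by
        simp [Nat.succ_sub_one, pow_succ]; ring
      rw [h1]
      have h2 : ((j+1+1 : ℕ).factorial : ℝ) = (j+2) * ((j+1:ℕ).factorial : ℝ) := by
        rw [Nat.factorial_succ]; push_cast; ring
      rw [h2]
      have hj : (2:ℝ) ≤ (j:ℝ)+2 := by linarith [Nat.cast_nonneg (α := ℝ) j]
      have := mul_le_mul hj ih (by positivity) (by positivity)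
      linarith

lemma pw_term_expand (lamn gamn x : ℝ) (cn : ℂ) {m : ℕ} (hm : 0 < m) :
    cn * (expFun gamn x - expFun lamn x)
      = (∑ k ∈ Finset.Ico 1 m,
          (cn * ((gamn - lamn : ℝ) : ℂ)^k) * expFun lamn x * ((2*π*Complex.I*x)^k / (k.factorial : ℂ)))
        + cn * expFun lamn x *
            (Complex.exp (2*π*Complex.I*((gamn - lamn : ℝ):ℂ)*x)
              - ∑ j ∈ Finset.range m, (2*π*Complex.I*((gamn - lamn : ℝ):ℂ)*x)^j / (j.factorial : ℂ)) := by
  have hexp : expFun gamn x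
      = expFun lamn x * Complex.exp (2*π*Complex.I*((gamn - lamn : ℝ):ℂ)*x) := by
    rw [expFun, expFun, ← Complex.exp_add]
    congr 1
    push_cast
    ring
  have hzk : ∀ k : ℕ, (2*π*Complex.I*((gamn - lamn : ℝ):ℂ)*x) ^ k
      = ((gamn - lamn : ℝ):ℂ)^k * (2*π*Complex.I*x)^k := by
    intro k
    rw [← mul_pow]
    congr 1
    ring
  have hsplit : (∑ j ∈ Finset.range m, (2*π*Complex.I*((gamn - lamn : ℝ):ℂ)*x)^j / (j.factorial : ℂ))
      = 1 + ∑ k ∈ Finset.Ico 1 m, (2*π*Complex.I*((gamn - lamn : ℝ):ℂ)*x)^k / (k.factorial : ℂ) := by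
    rw [Finset.range_eq_Ico, Finset.sum_eq_sum_Ico_succ_bot hm]
    simp
  have hmain : cn * expFun lamn x
        * (∑ k ∈ Finset.Ico 1 m, (2*π*Complex.I*((gamn - lamn : ℝ):ℂ)*x)^k / (k.factorial : ℂ))
      = ∑ k ∈ Finset.Ico 1 m,
          (cn * ((gamn - lamn : ℝ) : ℂ)^k) * expFun lamn x * ((2*π*Complex.I*x)^k / (k.factorial : ℂ)) := by
    rw [Finset.mul_sum]
    refine Finset.sum_congr rfl fun k _ => ?_
    rw [hzk k]
    ring
  rw [hexp, ← hmain]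
  linear_combination cn * expFun lamn x * hsplit

lemma pw_rem_coef (m : ℕ) (hm : 1 ≤ m)
    (hfac : (2:ℝ)^(m-1) ≤ m.factorial) :
    ((m:ℝ)+1) * (((m.factorial : ℝ)) * m)⁻¹ ≤ 4 * (1/2:ℝ)^m := by
  have hm1 : (1:ℝ) ≤ (m:ℝ) := by exact_mod_cast hm
  have h2 : (0:ℝ) < (2:ℝ)^(m-1) := by positivity
  have hmpos : (0:ℝ) < m := by linarith
  have step1 : ((m:ℝ)+1) * (((m.factorial : ℝ)) * m)⁻¹
      ≤ ((m:ℝ)+1) * ((2:ℝ)^(m-1) * (m:ℝ))⁻¹ := by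
    apply mul_le_mul_of_nonneg_left _ (by linarith)
    apply inv_anti₀ (by positivity)
    exact mul_le_mul_of_nonneg_right hfac hmpos.le
  refine step1.trans ?_
  have hm' : m - 1 + 1 = m := Nat.succ_pred_eq_of_pos hm
  have hpow : (1/2:ℝ)^m = ((2:ℝ)^(m-1) * 2)⁻¹ := by
    rw [div_pow, one_pow, one_div]
    congr 1
    rw [← pow_succ, hm']
  rw [hpow, ← div_eq_mul_inv, ← div_eq_mul_inv, div_le_div_iff₀ (by positivity) (by positivity)]
  nlinarith [mul_le_mul_of_nonneg_left (show (m:ℝ)+1 ≤ 2*m by linarith)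
    (show (0:ℝ) ≤ (2:ℝ)^(m-1)*2 by positivity)]

lemma pw_norm_z (d x : ℝ) : ‖(2*π*Complex.I*(d:ℂ)*(x:ℂ))‖ = 2*π*(abs d * abs x) := by
  simp [map_mul, abs_of_pos Real.pi_pos]
  ring

lemma pw_norm_zx (x : ℝ) : ‖(2*π*Complex.I*(x:ℂ))‖ = 2*π*|x| := by
  simp [map_mul, abs_of_pos Real.pi_pos]

attribute [fun_prop] continuous_expFun

lemma pwN_le_of_sq (S : Set ℝ) (f : ℝ → ℂ) {b : ℝ} (hb : 0 ≤ b)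
    (h : ∫ x in S, ‖f x‖ ^ 2 ≤ b ^ 2) : pwN S f ≤ b := by
  rw [pwN]
  calc Real.sqrt (∫ x in S, ‖f x‖ ^ 2) ≤ Real.sqrt (b^2) := Real.sqrt_le_sqrt h
    _ = b := by rw [Real.sqrt_sq hb]

lemma pw_key (S : Set ℝ) (hSm : MeasurableSet S) (hSb : Bornology.IsBounded S)
    (R K : ℝ) (hR1 : 1 ≤ R) (hRS : ∀ x ∈ S, |x| ≤ R) (hK : 1 ≤ K)
    (lam gam : ℕ → ℝ)
    (hRB : ∀ (F : Finset ℕ) (c : ℕ → ℂ),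
      ∫ x in S, ‖∑ n ∈ F, c n * expFun (lam n) x‖ ^ 2 ≤ K * ∑ n ∈ F, ‖c n‖ ^ 2)
    (μ₀ : ℝ) (hμ : 0 < μ₀) (hA1 : 2*π*R*μ₀ ≤ 1)
    (hgam : ∀ n, |gam n - lam n| ≤ μ₀)
    (F : Finset ℕ) (c : ℕ → ℂ) :
    pwN S (fun x => ∑ n ∈ F, c n * (expFun (gam n) x - expFun (lam n) x))
      ≤ 2 * (2*π*R*μ₀) * Real.sqrt K * Real.sqrt (∑ n ∈ F, ‖c n‖ ^ 2) := by
  have hπ := Real.pi_pos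
  set A : ℝ := 2*π*R*μ₀ with hA
  have hA0 : 0 < A := by positivity
  set s : ℝ := Real.sqrt (∑ n ∈ F, ‖c n‖ ^ 2) with hs
  have hs0 : 0 ≤ s := Real.sqrt_nonneg _
  have hs2 : s ^ 2 = ∑ n ∈ F, ‖c n‖ ^ 2 :=
    Real.sq_sqrt (Finset.sum_nonneg fun n _ => by positivity)
  have hsK0 : (0:ℝ) ≤ Real.sqrt K := Real.sqrt_nonneg _
  refine le_of_forall_pos_le_add fun ε hε => ?_
  -- choose m
  set CF : ℝ := Real.sqrt (volume S).toReal * (∑ n ∈ F, ‖c n‖) * 4 + 1 with hCF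
  have hCF0 : 0 < CF := by
    have : 0 ≤ Real.sqrt (volume S).toReal * (∑ n ∈ F, ‖c n‖) * 4 := by
      have : 0 ≤ ∑ n ∈ F, ‖c n‖ := Finset.sum_nonneg fun n _ => norm_nonneg _
      positivity
    linarith
  obtain ⟨m₀, hm₀⟩ := exists_pow_lt_of_lt_one (div_pos hε hCF0) (by norm_num : (1:ℝ)/2 < 1)
  set m : ℕ := m₀ + 1 with hmdef
  have hm : 0 < m := Nat.succ_pos _
  have hm1 : 1 ≤ m := hm
  have hmε : CF * (1/2:ℝ)^m < ε := by
    have h1 : (1/2:ℝ)^m ≤ (1/2:ℝ)^m₀ :=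
      pow_le_pow_of_le_one (by norm_num) (by norm_num) (Nat.le_succ _)
    have h2 : (1/2:ℝ)^m < ε / CF := lt_of_le_of_lt h1 hm₀
    calc CF * (1/2:ℝ)^m < CF * (ε / CF) := by
          exact mul_lt_mul_of_pos_left h2 hCF0
      _ = ε := by field_simp
  -- the pieces
  set T : ℕ → ℝ → ℂ := fun k x => ∑ n ∈ F,
    (c n * ((gam n - lam n : ℝ):ℂ)^k) * expFun (lam n) x * ((2*π*Complex.I*x)^k / (k.factorial : ℂ))
    with hT
  set Rm : ℝ → ℂ := fun x => ∑ n ∈ F, c n * expFun (lam n) x *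
    (Complex.exp (2*π*Complex.I*((gam n - lam n : ℝ):ℂ)*x)
      - ∑ j ∈ Finset.range m, (2*π*Complex.I*((gam n - lam n : ℝ):ℂ)*x)^j / (j.factorial : ℂ))
    with hRm
  set u : ℕ → ℝ → ℂ := fun k x => ∑ n ∈ F,
    (c n * ((gam n - lam n : ℝ):ℂ)^k) * expFun (lam n) x with hu
  have hTc : ∀ k, Continuous (T k) := by
    intro k; rw [hT]; fun_prop
  have hRmc : Continuous Rm := by
    rw [hRm]; unfold expFun; fun_prop
  have huc : ∀ k, Continuous (u k) := by
    intro k; rw [hu]; fun_prop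
  have hTm : ∀ k, MemLp (T k) 2 (volume.restrict S) :=
    fun k => pw_memℒp_of_continuous hSm hSb (hTc k)
  have hRmm : MemLp Rm 2 (volume.restrict S) := pw_memℒp_of_continuous hSm hSb hRmc
  have hum : ∀ k, MemLp (u k) 2 (volume.restrict S) :=
    fun k => pw_memℒp_of_continuous hSm hSb (huc k)
  -- the decomposition
  have hD : (fun x => ∑ n ∈ F, c n * (expFun (gam n) x - expFun (lam n) x))
      = fun x => (∑ k ∈ Finset.Ico 1 m, T k x) + Rm x := by
    funext x
    rw [Finset.sum_congr rfl (fun n _ => pw_term_expand (lam n) (gam n) x (c n) hm)]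
    rw [Finset.sum_add_distrib, Finset.sum_comm]
  rw [hD]
  -- triangle inequality
  have hsumT : MemLp (fun x => ∑ k ∈ Finset.Ico 1 m, T k x) 2 (volume.restrict S) :=
    pw_memℒp_of_continuous hSm hSb (by fun_prop)
  have htri : pwN S (fun x => (∑ k ∈ Finset.Ico 1 m, T k x) + Rm x)
      ≤ (∑ k ∈ Finset.Ico 1 m, pwN S (T k)) + pwN S Rm := by
    refine le_trans (pwN_add_le S hsumT hRmm) ?_
    have := pwN_sum_le S (Finset.Ico 1 m) T (fun k _ => hTm k)
    linarith
  refine htri.trans ?_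
  -- bound on each T k
  have hTk : ∀ k ∈ Finset.Ico 1 m, pwN S (T k) ≤ (A^k / k.factorial) * (Real.sqrt K * s) := by
    intro k hk
    have hk1 : 1 ≤ k := (Finset.mem_Ico.mp hk).1
    -- pointwise bound
    have hpt : ∀ x ∈ S, ‖T k x‖ ^ 2 ≤ ((2*π*R)^k / k.factorial)^2 * ‖u k x‖^2 := by
      intro x hx
      have hTeq : T k x = ((2*π*Complex.I*x)^k / (k.factorial : ℂ)) * u k x := by
        rw [hT, hu]
        simp only [Finset.mul_sum]
        exact Finset.sum_congr rfl fun n _ => by ring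
      rw [hTeq, norm_mul]
      have hn1 : ‖(2*π*Complex.I*(x:ℂ))^k / (k.factorial : ℂ)‖ ≤ (2*π*R)^k / k.factorial := by
        rw [norm_div, norm_pow, pw_norm_zx]
        have h1 : (2*π*|x|)^k ≤ (2*π*R)^k := by
          apply pow_le_pow_left₀ (by positivity)
          have := hRS x hx
          nlinarith
        have h2 : ‖((k.factorial : ℕ) : ℂ)‖ = (k.factorial : ℝ) := by simp
        rw [h2]
        exact div_le_div_of_nonneg_right h1 (by positivity)
      rw [mul_pow]
      exact mul_le_mul_of_nonneg_right (pow_le_pow_left₀ (norm_nonneg _) hn1 2) (by positivity)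
    -- integral bound
    have hint : ∫ x in S, ‖T k x‖^2
        ≤ ((2*π*R)^k / (k.factorial:ℝ))^2 * ∫ x in S, ‖u k x‖^2 := by
      have hInt1 := pw_integrable_sq (hTm k)
      have hInt2 := (pw_integrable_sq (hum k)).const_mul (((2*π*R)^k / (k.factorial:ℝ))^2)
      have hmono := setIntegral_mono_on hInt1 hInt2 hSm hpt
      rwa [integral_const_mul] at hmono
    have huk : ∫ x in S, ‖u k x‖^2 ≤ K * ((μ₀^k)^2 * s^2) := by
      refine (hRB F _).trans ?_
      apply mul_le_mul_of_nonneg_left _ (by linarith : (0:ℝ) ≤ K)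
      rw [hs2, Finset.mul_sum]
      refine Finset.sum_le_sum fun n _ => ?_
      rw [norm_mul, norm_pow, mul_pow, Complex.norm_real]
      have hd : |gam n - lam n|^k ≤ μ₀^k := pow_le_pow_left₀ (abs_nonneg _) (hgam n) k
      have : (|gam n - lam n|^k)^2 ≤ (μ₀^k)^2 :=
        pow_le_pow_left₀ (by positivity) hd 2
      calc ‖c n‖^2 * (|gam n - lam n|^k)^2 ≤ ‖c n‖^2 * (μ₀^k)^2 :=
            mul_le_mul_of_nonneg_left this (by positivity)
        _ = (μ₀^k)^2 * ‖c n‖^2 := by ring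
    apply pwN_le_of_sq _ _
      (mul_nonneg (div_nonneg (pow_nonneg hA0.le k) (Nat.cast_nonneg _))
        (mul_nonneg hsK0 hs0))
    calc ∫ x in S, ‖T k x‖^2
        ≤ ((2*π*R)^k / (k.factorial:ℝ))^2 * (K * ((μ₀^k)^2 * s^2)) := by
          refine hint.trans ?_
          exact mul_le_mul_of_nonneg_left huk (by positivity)
      _ = (A^k / k.factorial * (Real.sqrt K * s))^2 := by
          have hKs : Real.sqrt K ^ 2 = K := Real.sq_sqrt (by linarith)
          have hAk : A^k = (2*π*R)^k * μ₀^k := by rw [hA, ← mul_pow]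
          rw [hAk]
          nth_rewrite 1 [show K = Real.sqrt K ^ 2 from hKs.symm]
          ring
  -- sum the T k bounds
  have hgeo : ∑ k ∈ Finset.Ico 1 m, (A^k / (k.factorial:ℝ)) ≤ 2*A := by
    have hterm : ∀ k ∈ Finset.Ico 1 m, A^k / (k.factorial:ℝ) ≤ A * (1/2:ℝ)^(k-1) := by
      intro k hk
      have hk1 : 1 ≤ k := (Finset.mem_Ico.mp hk).1
      have hAk : A^k ≤ A := by
        calc A^k ≤ A^1 := pow_le_pow_of_le_one hA0.le hA1 hk1
          _ = A := pow_one A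
      have hfk : ((k.factorial:ℝ))⁻¹ ≤ (1/2:ℝ)^(k-1) := by
        rw [div_pow, one_pow, one_div]
        exact inv_anti₀ (by positivity) (pw_two_pow_le_factorial k)
      calc A^k / (k.factorial:ℝ) = A^k * ((k.factorial:ℝ))⁻¹ := div_eq_mul_inv _ _
        _ ≤ A * (1/2:ℝ)^(k-1) := mul_le_mul hAk hfk (by positivity) hA0.le
    refine (Finset.sum_le_sum hterm).trans ?_
    rw [← Finset.mul_sum]
    have hg2 : (∑ k ∈ Finset.Ico 1 m, (1/2:ℝ)^(k-1)) ≤ 2 := by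
      rw [Finset.sum_Ico_eq_sum_range]
      simp only [Nat.add_sub_cancel_left, add_tsub_cancel_left]
      exact sum_geometric_two_le _
    calc A * (∑ k ∈ Finset.Ico 1 m, (1/2:ℝ)^(k-1))
        ≤ A * 2 := mul_le_mul_of_nonneg_left hg2 hA0.le
      _ = 2*A := by ring
  have hTsum : ∑ k ∈ Finset.Ico 1 m, pwN S (T k) ≤ 2*A*(Real.sqrt K * s) := by
    calc ∑ k ∈ Finset.Ico 1 m, pwN S (T k)
        ≤ ∑ k ∈ Finset.Ico 1 m, (A^k / (k.factorial:ℝ)) * (Real.sqrt K * s) :=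
          Finset.sum_le_sum hTk
      _ = (∑ k ∈ Finset.Ico 1 m, (A^k / (k.factorial:ℝ))) * (Real.sqrt K * s) :=
          (Finset.sum_mul _ _ _).symm
      _ ≤ 2*A*(Real.sqrt K * s) :=
          mul_le_mul_of_nonneg_right hgeo (mul_nonneg hsK0 hs0)
  -- bound on Rm
  have hc0 : (0:ℝ) ≤ ∑ n ∈ F, ‖c n‖ := Finset.sum_nonneg fun n _ => norm_nonneg _
  have hRp : ∀ x ∈ S, ‖Rm x‖ ≤ (∑ n ∈ F, ‖c n‖) * (4*(1/2:ℝ)^m) := by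
    intro x hx
    rw [hRm]
    refine (norm_sum_le _ _).trans ?_
    rw [Finset.sum_mul]
    refine Finset.sum_le_sum fun n _ => ?_
    rw [norm_mul, norm_mul, norm_expFun, mul_one]
    refine mul_le_mul_of_nonneg_left ?_ (norm_nonneg _)
    have hz : ‖(2*π*Complex.I*((gam n - lam n:ℝ):ℂ)*(x:ℂ))‖ ≤ 1 := by
      rw [pw_norm_z]
      have h1 := hgam n
      have h2 := hRS x hx
      have h3 : 2*π*(|gam n - lam n| * |x|) ≤ 2*π*R*μ₀ := by
        have := mul_le_mul h1 h2 (abs_nonneg x) hμ.le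
        nlinarith
      linarith [hA1]
    have hb := Complex.exp_bound
      (x := (2*π*Complex.I*((gam n - lam n:ℝ):ℂ)*(x:ℂ)))
      hz hm
    refine hb.trans ?_
    have h1 : ‖(2*π*Complex.I*((gam n - lam n:ℝ):ℂ)*(x:ℂ))‖^m ≤ 1 :=
      pow_le_one₀ (norm_nonneg _) hz
    have h2 := pw_rem_coef m hm1 (pw_two_pow_le_factorial m)
    have h3 : ((m.succ : ℕ):ℝ) * ((m.factorial:ℝ) * (m:ℝ))⁻¹ ≤ 4*(1/2:ℝ)^m := by
      have : ((m.succ : ℕ):ℝ) = (m:ℝ) + 1 := by push_cast; ring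
      rw [this]; exact h2
    calc ‖(2*π*Complex.I*((gam n - lam n:ℝ):ℂ)*(x:ℂ))‖^m * (((m.succ : ℕ):ℝ) * ((m.factorial:ℝ) * (m:ℝ))⁻¹)
        ≤ 1 * (4*(1/2:ℝ)^m) := by
          refine mul_le_mul h1 h3 ?_ (by norm_num)
          positivity
      _ = 4*(1/2:ℝ)^m := one_mul _
  have hRmb : pwN S Rm ≤ Real.sqrt (volume S).toReal * ((∑ n ∈ F, ‖c n‖) * (4*(1/2:ℝ)^m)) := by
    apply pwN_le_of_sq _ _
      (mul_nonneg (Real.sqrt_nonneg _) (mul_nonneg hc0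
        (mul_nonneg (by norm_num) (pow_nonneg (by norm_num) m))))
    have hmono : ∫ x in S, ‖Rm x‖^2 ≤ ∫ _x in S, ((∑ n ∈ F, ‖c n‖) * (4*(1/2:ℝ)^m))^2 :=
      setIntegral_mono_on (pw_integrable_sq hRmm)
        (integrableOn_const hSb.measure_lt_top.ne) hSm
        (fun x hx => pow_le_pow_left₀ (norm_nonneg _) (hRp x hx) 2)
    refine hmono.trans ?_
    rw [setIntegral_const, smul_eq_mul]
    have hsq : (Real.sqrt (volume S).toReal * ((∑ n ∈ F, ‖c n‖) * (4*(1/2:ℝ)^m)))^2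
        = (volume S).toReal * ((∑ n ∈ F, ‖c n‖) * (4*(1/2:ℝ)^m))^2 := by
      rw [mul_pow, Real.sq_sqrt ENNReal.toReal_nonneg]
    rw [hsq]; exact le_rfl
  have hRmε : pwN S Rm ≤ ε := by
    refine hRmb.trans ?_
    have heq : Real.sqrt (volume S).toReal * ((∑ n ∈ F, ‖c n‖) * (4*(1/2:ℝ)^m))
        = (Real.sqrt (volume S).toReal * (∑ n ∈ F, ‖c n‖) * 4) * (1/2:ℝ)^m := by ring
    rw [heq]
    have hle : Real.sqrt (volume S).toReal * (∑ n ∈ F, ‖c n‖) * 4 ≤ CF := by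
      rw [hCF]; linarith
    calc (Real.sqrt (volume S).toReal * (∑ n ∈ F, ‖c n‖) * 4) * (1/2:ℝ)^m
        ≤ CF * (1/2:ℝ)^m := mul_le_mul_of_nonneg_right hle (by positivity)
      _ ≤ ε := hmε.le
  refine (add_le_add hTsum hRmε).trans (le_of_eq ?_)
  ring

def IsRieszBasisExpSeq (S : Set ℝ) (lam : ℕ → ℝ) : Prop :=
  (∀ f : ℝ → ℂ, MemLp f 2 (volume.restrict S) →
      ∀ ε > 0, ∃ (F : Finset ℕ) (c : ℕ → ℂ),
        ∫ x in S, ‖f x - ∑ n ∈ F, c n * expFun (lam n) x‖ ^ 2 < ε) ∧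
  ∃ K ≥ (1 : ℝ), ∀ (F : Finset ℕ) (c : ℕ → ℂ),
    (1 / K) * ∑ n ∈ F, ‖c n‖ ^ 2 ≤ ∫ x in S, ‖∑ n ∈ F, c n * expFun (lam n) x‖ ^ 2 ∧
    ∫ x in S, ‖∑ n ∈ F, c n * expFun (lam n) x‖ ^ 2 ≤ K * ∑ n ∈ F, ‖c n‖ ^ 2

set_option maxHeartbeats 1000000 in
/-- Paley–Wiener perturbation theorem: a small enough perturbation of the
frequencies of a Riesz basis of exponentials is again a Riesz basis. -/
theorem paley_wiener_perturbation (S : Set ℝ) (hSm : MeasurableSet S)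
    (hSb : Bornology.IsBounded S) (hS : 0 < volume S)
    (lam : ℕ → ℝ) (h : IsRieszBasisExpSeq S lam) :
    ∃ μ > (0 : ℝ), ∀ gam : ℕ → ℝ, (∀ n, |lam n - gam n| < μ) →
      IsRieszBasisExpSeq S gam := by
  have hπ := Real.pi_pos
  obtain ⟨hcompl, K, hK1, hKb⟩ := h
  -- radius bound
  obtain ⟨r, hr⟩ := hSb.subset_closedBall 0
  set R : ℝ := max r 1 with hR
  have hR1 : 1 ≤ R := le_max_right _ _
  have hRS : ∀ x ∈ S, |x| ≤ R := by
    intro x hx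
    have := hr hx
    rw [Metric.mem_closedBall, Real.dist_eq, sub_zero] at this
    exact this.trans (le_max_left _ _)
  have hK0 : (0:ℝ) < K := by linarith
  have hsK1 : (1:ℝ) ≤ Real.sqrt K := by
    rw [show (1:ℝ) = Real.sqrt 1 by simp]
    exact Real.sqrt_le_sqrt hK1
  have hsK0 : (0:ℝ) < Real.sqrt K := by linarith
  have hsK2 : Real.sqrt K * Real.sqrt K = K := Real.mul_self_sqrt hK0.le
  -- choice of μ
  refine ⟨1/(16*π*R*K), by positivity, ?_⟩
  intro gam hgam
  set μ₀ : ℝ := 1/(16*π*R*K) with hμ₀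
  have hμpos : 0 < μ₀ := by positivity
  have hgam' : ∀ n, |gam n - lam n| ≤ μ₀ := fun n => by
    rw [abs_sub_comm]; exact (hgam n).le
  have hπ' : π ≠ 0 := ne_of_gt hπ
  have hR0 : R ≠ 0 := by positivity
  have hKne : K ≠ 0 := ne_of_gt hK0
  have h8 : 2*π*R*μ₀ = 1/(8*K) := by
    rw [hμ₀]; field_simp; ring
  have hA1 : 2*π*R*μ₀ ≤ 1 := by
    rw [h8, div_le_one (by positivity)]; linarith
  set B : ℝ := 2 * (2*π*R*μ₀) * Real.sqrt K with hB
  have hBK : B * Real.sqrt K = 1/4 := by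
    rw [hB, h8, mul_assoc, hsK2]
    field_simp
    ring
  have hB0 : 0 ≤ B := by positivity
  -- the Riesz bound hypothesis in the form pw_key wants
  have hRB : ∀ (F : Finset ℕ) (c : ℕ → ℂ),
      ∫ x in S, ‖∑ n ∈ F, c n * expFun (lam n) x‖ ^ 2 ≤ K * ∑ n ∈ F, ‖c n‖ ^ 2 :=
    fun F c => (hKb F c).2
  have hkey : ∀ (F : Finset ℕ) (c : ℕ → ℂ),
      pwN S (fun x => ∑ n ∈ F, c n * (expFun (gam n) x - expFun (lam n) x))
        ≤ B * Real.sqrt (∑ n ∈ F, ‖c n‖ ^ 2) :=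
    fun F c => pw_key S hSm hSb R K hR1 hRS hK1 lam gam hRB μ₀ hμpos hA1 hgam' F c
  -- MemLp facts
  have hmemg : ∀ (F : Finset ℕ) (c : ℕ → ℂ) (l : ℕ → ℝ),
      MemLp (fun x => ∑ n ∈ F, c n * expFun (l n) x) 2 (volume.restrict S) :=
    fun F c l => pw_memℒp_of_continuous hSm hSb (by fun_prop)
  -- diff of the two finite sums
  have hdiff : ∀ (F : Finset ℕ) (c : ℕ → ℂ) (x : ℝ),
      (∑ n ∈ F, c n * expFun (gam n) x) - (∑ n ∈ F, c n * expFun (lam n) x)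
        = ∑ n ∈ F, c n * (expFun (gam n) x - expFun (lam n) x) := by
    intro F c x
    rw [← Finset.sum_sub_distrib]
    exact Finset.sum_congr rfl fun n _ => by ring
  -- pwN facts for lam-sums from the Riesz hypothesis
  have hlow : ∀ (F : Finset ℕ) (c : ℕ → ℂ),
      Real.sqrt (∑ n ∈ F, ‖c n‖ ^ 2)
        ≤ Real.sqrt K * pwN S (fun x => ∑ n ∈ F, c n * expFun (lam n) x) := by
    intro F c
    have h1 := (hKb F c).1
    have h2 : (∑ n ∈ F, ‖c n‖ ^ 2)
        ≤ K * pwN S (fun x => ∑ n ∈ F, c n * expFun (lam n) x) ^ 2 := by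
      rw [pwN_sq]
      have h3 := mul_le_mul_of_nonneg_left h1 hK0.le
      calc (∑ n ∈ F, ‖c n‖ ^ 2) = K * ((1/K) * ∑ n ∈ F, ‖c n‖ ^ 2) := by
            field_simp
        _ ≤ K * ∫ x in S, ‖∑ n ∈ F, c n * expFun (lam n) x‖ ^ 2 := h3
    calc Real.sqrt (∑ n ∈ F, ‖c n‖ ^ 2)
        ≤ Real.sqrt (K * pwN S (fun x => ∑ n ∈ F, c n * expFun (lam n) x) ^ 2) :=
          Real.sqrt_le_sqrt h2
      _ = Real.sqrt K * pwN S (fun x => ∑ n ∈ F, c n * expFun (lam n) x) := by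
          rw [Real.sqrt_mul hK0.le, Real.sqrt_sq (pwN_nonneg _ _)]
  have hup : ∀ (F : Finset ℕ) (c : ℕ → ℂ),
      pwN S (fun x => ∑ n ∈ F, c n * expFun (lam n) x)
        ≤ Real.sqrt K * Real.sqrt (∑ n ∈ F, ‖c n‖ ^ 2) := by
    intro F c
    apply pwN_le_of_sq _ _ (by positivity)
    rw [mul_pow, Real.sq_sqrt hK0.le, Real.sq_sqrt (Finset.sum_nonneg fun n _ => by positivity)]
    exact (hKb F c).2
  -- MemLp of difference sums
  have hmemd : ∀ (F : Finset ℕ) (c : ℕ → ℂ),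
      MemLp (fun x => ∑ n ∈ F, c n * (expFun (gam n) x - expFun (lam n) x)) 2
        (volume.restrict S) :=
    fun F c => pw_memℒp_of_continuous hSm hSb (by fun_prop)
  have hB' : B ≤ Real.sqrt K := by nlinarith [hBK, hsK2, hsK1, hsK0]
  -- upper bound for perturbed sums
  have hupgam : ∀ (F : Finset ℕ) (c : ℕ → ℂ),
      pwN S (fun x => ∑ n ∈ F, c n * expFun (gam n) x)
        ≤ 2 * Real.sqrt K * Real.sqrt (∑ n ∈ F, ‖c n‖ ^ 2) := by
    intro F c
    have heq : (fun x => ∑ n ∈ F, c n * expFun (gam n) x)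
        = fun x => (∑ n ∈ F, c n * expFun (lam n) x)
            + (∑ n ∈ F, c n * (expFun (gam n) x - expFun (lam n) x)) := by
      funext x; rw [← hdiff F c x]; ring
    have h1 : pwN S (fun x => ∑ n ∈ F, c n * expFun (gam n) x)
        ≤ pwN S (fun x => ∑ n ∈ F, c n * expFun (lam n) x)
          + pwN S (fun x => ∑ n ∈ F, c n * (expFun (gam n) x - expFun (lam n) x)) := by
      rw [heq]
      exact pwN_add_le S (hmemg F c lam) (hmemd F c)
    have h2 := hkey F c
    have h3 := hup F c
    have hs0 : 0 ≤ Real.sqrt (∑ n ∈ F, ‖c n‖ ^ 2) := Real.sqrt_nonneg _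
    nlinarith [mul_le_mul_of_nonneg_right hB' hs0]
  -- lower bound for perturbed sums
  have hlowgam : ∀ (F : Finset ℕ) (c : ℕ → ℂ),
      Real.sqrt (∑ n ∈ F, ‖c n‖ ^ 2)
        ≤ 2 * Real.sqrt K * pwN S (fun x => ∑ n ∈ F, c n * expFun (gam n) x) := by
    intro F c
    have heq : (fun x => ∑ n ∈ F, c n * expFun (lam n) x)
        = fun x => (∑ n ∈ F, c n * expFun (gam n) x)
            - (∑ n ∈ F, c n * (expFun (gam n) x - expFun (lam n) x)) := by
      funext x; rw [← hdiff F c x]; ring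
    have h1 : pwN S (fun x => ∑ n ∈ F, c n * expFun (lam n) x)
        ≤ pwN S (fun x => ∑ n ∈ F, c n * expFun (gam n) x)
          + pwN S (fun x => ∑ n ∈ F, c n * (expFun (gam n) x - expFun (lam n) x)) := by
      rw [heq]
      have heq2 : (fun x => (∑ n ∈ F, c n * expFun (gam n) x)
            - (∑ n ∈ F, c n * (expFun (gam n) x - expFun (lam n) x)))
          = fun x => (∑ n ∈ F, c n * expFun (gam n) x)
            + (-(∑ n ∈ F, c n * (expFun (gam n) x - expFun (lam n) x))) := by
        funext x; ring
      rw [heq2]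
      have hneg : MemLp (fun x => -(∑ n ∈ F, c n * (expFun (gam n) x - expFun (lam n) x))) 2
          (volume.restrict S) := (hmemd F c).neg
      refine (pwN_add_le S (hmemg F c gam) hneg).trans ?_
      have : pwN S (fun x => -(∑ n ∈ F, c n * (expFun (gam n) x - expFun (lam n) x)))
          = pwN S (fun x => ∑ n ∈ F, c n * (expFun (gam n) x - expFun (lam n) x)) := by
        unfold pwN; congr 1; apply integral_congr_ae; filter_upwards with x; rw [norm_neg]
      rw [this]
    have h2 := hkey F c
    have h3 := hlow F c
    have hs0 : 0 ≤ Real.sqrt (∑ n ∈ F, ‖c n‖ ^ 2) := Real.sqrt_nonneg _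
    -- s ≤ √K pwN g ≤ √K (pwN gg + pwN D) ≤ √K pwN gg + √K B s = √K pwN gg + s/4
    have h4 := mul_le_mul_of_nonneg_left h1 hsK0.le
    have h5 := mul_le_mul_of_nonneg_left h2 hsK0.le
    nlinarith [hBK, pwN_nonneg S (fun x => ∑ n ∈ F, c n * expFun (gam n) x)]
  constructor
  · -- completeness
    -- iteration
    have hcomp : ∀ (mi : ℕ) (f : ℝ → ℂ), MemLp f 2 (volume.restrict S) → ∀ η > (0:ℝ),
        ∃ (F : Finset ℕ) (c : ℕ → ℂ),
          pwN S (fun x => f x - ∑ n ∈ F, c n * expFun (gam n) x)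
            ≤ (1/2:ℝ)^mi * pwN S f + 4*η := by
      intro mi
      induction mi with
      | zero =>
        intro f hf η hη
        refine ⟨∅, 0, ?_⟩
        have heq : (fun x => f x - ∑ n ∈ (∅ : Finset ℕ), (0:ℕ → ℂ) n * expFun (gam n) x)
            = f := by funext x; simp
        rw [heq]
        have := pwN_nonneg S f
        norm_num
        linarith
      | succ mi ih =>
        intro f hf η hη
        obtain ⟨F₁, c₁, hFc₁⟩ := hcompl f hf ((η/2)^2) (by positivity)
        have hg : MemLp (fun x => ∑ n ∈ F₁, c₁ n * expFun (lam n) x) 2 (volume.restrict S) :=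
          hmemg F₁ c₁ lam
        have hgg : MemLp (fun x => ∑ n ∈ F₁, c₁ n * expFun (gam n) x) 2 (volume.restrict S) :=
          hmemg F₁ c₁ gam
        have hfg : pwN S (fun x => f x - ∑ n ∈ F₁, c₁ n * expFun (lam n) x) ≤ η/2 :=
          pwN_le_of_sq _ _ (by positivity) hFc₁.le
        -- bound pwN of (g - gg)
        have hggd : pwN S (fun x => (∑ n ∈ F₁, c₁ n * expFun (lam n) x)
              - ∑ n ∈ F₁, c₁ n * expFun (gam n) x)
            ≤ B * Real.sqrt (∑ n ∈ F₁, ‖c₁ n‖ ^ 2) := by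
          have heq : (fun x => (∑ n ∈ F₁, c₁ n * expFun (lam n) x)
                - ∑ n ∈ F₁, c₁ n * expFun (gam n) x)
              = fun x => -(∑ n ∈ F₁, c₁ n * (expFun (gam n) x - expFun (lam n) x)) := by
            funext x; rw [← hdiff F₁ c₁ x]; ring
          rw [heq]
          have hneg : pwN S (fun x => -(∑ n ∈ F₁, c₁ n * (expFun (gam n) x - expFun (lam n) x)))
              = pwN S (fun x => ∑ n ∈ F₁, c₁ n * (expFun (gam n) x - expFun (lam n) x)) := by
            unfold pwN; congr 1; apply integral_congr_ae; filter_upwards with x; rw [norm_neg]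
          rw [hneg]
          exact hkey F₁ c₁
        -- pwN g ≤ pwN f + η/2
        have hgf : pwN S (fun x => ∑ n ∈ F₁, c₁ n * expFun (lam n) x) ≤ pwN S f + η/2 := by
          have heq : (fun x => ∑ n ∈ F₁, c₁ n * expFun (lam n) x)
              = fun x => f x + -(f x - ∑ n ∈ F₁, c₁ n * expFun (lam n) x) := by
            funext x; ring
          rw [heq]
          refine (pwN_add_le S hf (show MemLp
              (fun x => -(f x - ∑ n ∈ F₁, c₁ n * expFun (lam n) x)) 2 (volume.restrict S)
              from (hf.sub hg).neg)).trans ?_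
          have hneg : pwN S (fun x => -(f x - ∑ n ∈ F₁, c₁ n * expFun (lam n) x))
              = pwN S (fun x => f x - ∑ n ∈ F₁, c₁ n * expFun (lam n) x) := by
            unfold pwN; congr 1; apply integral_congr_ae; filter_upwards with x; rw [norm_neg]
          rw [hneg]
          linarith
        -- pwN (f - gg) ≤ (1/2) pwN f + η
        have hstep : pwN S (fun x => f x - ∑ n ∈ F₁, c₁ n * expFun (gam n) x)
            ≤ (1/2) * pwN S f + η := by
          have htr : pwN S (fun x => f x - ∑ n ∈ F₁, c₁ n * expFun (gam n) x)
              ≤ pwN S (fun x => f x - ∑ n ∈ F₁, c₁ n * expFun (lam n) x)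
                + pwN S (fun x => (∑ n ∈ F₁, c₁ n * expFun (lam n) x)
                    - ∑ n ∈ F₁, c₁ n * expFun (gam n) x) := by
            have heq : (fun x => f x - ∑ n ∈ F₁, c₁ n * expFun (gam n) x)
                = fun x => (f x - ∑ n ∈ F₁, c₁ n * expFun (lam n) x)
                    + ((∑ n ∈ F₁, c₁ n * expFun (lam n) x)
                      - ∑ n ∈ F₁, c₁ n * expFun (gam n) x) := by
              funext x; ring
            rw [heq]
            exact pwN_add_le S (hf.sub hg) (hg.sub hgg)
          have hD4 : pwN S (fun x => (∑ n ∈ F₁, c₁ n * expFun (lam n) x)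
                - ∑ n ∈ F₁, c₁ n * expFun (gam n) x)
              ≤ (1/4) * (pwN S f + η/2) := by
            refine hggd.trans ?_
            have h5 := hlow F₁ c₁
            have h6 := mul_le_mul_of_nonneg_left h5 hB0
            have h7 : B * (Real.sqrt K * pwN S (fun x => ∑ n ∈ F₁, c₁ n * expFun (lam n) x))
                ≤ (1/4) * (pwN S f + η/2) := by
              rw [← mul_assoc, hBK]
              linarith [hgf]
            linarith
          linarith [pwN_nonneg S f]
        -- apply IH to the remainder
        obtain ⟨F₂, c₂, hFc₂⟩ := ih (fun x => f x - ∑ n ∈ F₁, c₁ n * expFun (gam n) x)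
          (hf.sub hgg) (η/2) (by positivity)
        refine ⟨F₁ ∪ F₂,
          (fun n => (if n ∈ F₁ then c₁ n else 0) + (if n ∈ F₂ then c₂ n else 0)), ?_⟩
        have hcsum : ∀ x, (∑ n ∈ F₁ ∪ F₂,
              ((if n ∈ F₁ then c₁ n else 0) + (if n ∈ F₂ then c₂ n else 0)) * expFun (gam n) x)
            = (∑ n ∈ F₁, c₁ n * expFun (gam n) x) + (∑ n ∈ F₂, c₂ n * expFun (gam n) x) := by
          intro x
          simp only [add_mul, ite_mul, zero_mul, Finset.sum_add_distrib, Finset.sum_ite_mem,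
            Finset.union_inter_cancel_left, Finset.union_inter_cancel_right]
        have heq : (fun x => f x - ∑ n ∈ F₁ ∪ F₂,
              ((if n ∈ F₁ then c₁ n else 0) + (if n ∈ F₂ then c₂ n else 0)) * expFun (gam n) x)
            = fun x => (f x - ∑ n ∈ F₁, c₁ n * expFun (gam n) x)
                - ∑ n ∈ F₂, c₂ n * expFun (gam n) x := by
          funext x; rw [hcsum x]; ring
        rw [heq]
        refine hFc₂.trans ?_
        have hmono : (1/2:ℝ)^mi * pwN S (fun x => f x - ∑ n ∈ F₁, c₁ n * expFun (gam n) x)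
            ≤ (1/2:ℝ)^mi * ((1/2) * pwN S f + η) :=
          mul_le_mul_of_nonneg_left hstep (by positivity)
        have hhalf : (1/2:ℝ)^mi ≤ 1 := pow_le_one₀ (by norm_num) (by norm_num)
        have hpow : (1/2:ℝ)^(mi+1) = (1/2:ℝ)^mi * (1/2) := pow_succ _ _
        rw [hpow]
        have hη2 : (1/2:ℝ)^mi * η ≤ η := by
          calc (1/2:ℝ)^mi * η ≤ 1 * η := mul_le_mul_of_nonneg_right hhalf hη.le
            _ = η := one_mul η
        have hexpand : (1/2:ℝ)^mi * ((1/2)*pwN S f + η)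
            = (1/2:ℝ)^mi*(1/2)*pwN S f + (1/2:ℝ)^mi*η := by ring
        linarith [hmono, hη2, hexpand]
    -- conclude completeness
    intro f hf ε hε
    have hsε : 0 < Real.sqrt ε := Real.sqrt_pos.mpr hε
    obtain ⟨mi, hmi⟩ := exists_pow_lt_of_lt_one
      (show (0:ℝ) < Real.sqrt ε / (4*(pwN S f + 1)) from
        div_pos hsε (by linarith [pwN_nonneg S f]))
      (by norm_num : (1:ℝ)/2 < 1)
    obtain ⟨F, c, hFc⟩ := hcomp mi f hf (Real.sqrt ε / 16) (div_pos hsε (by norm_num))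
    refine ⟨F, c, ?_⟩
    have h1 : (1/2:ℝ)^mi * pwN S f ≤ Real.sqrt ε / 4 := by
      have h2 : (1/2:ℝ)^mi * pwN S f
          ≤ (Real.sqrt ε / (4 * (pwN S f + 1))) * (pwN S f + 1) := by
        exact mul_le_mul hmi.le (by linarith [pwN_nonneg S f]) (pwN_nonneg S f)
          (le_of_lt (div_pos hsε (by linarith [pwN_nonneg S f])))
      have h3 : (Real.sqrt ε / (4 * (pwN S f + 1))) * (pwN S f + 1) = Real.sqrt ε / 4 := by
        have hne : pwN S f + 1 ≠ 0 := by linarith [pwN_nonneg S f]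
        field_simp
      linarith
    have hb : pwN S (fun x => f x - ∑ n ∈ F, c n * expFun (gam n) x) ≤ Real.sqrt ε / 2 := by
      refine hFc.trans ?_
      linarith
    calc ∫ x in S, ‖f x - ∑ n ∈ F, c n * expFun (gam n) x‖ ^ 2
        = pwN S (fun x => f x - ∑ n ∈ F, c n * expFun (gam n) x) ^ 2 := (pwN_sq _ _).symm
      _ ≤ (Real.sqrt ε / 2)^2 :=
          pow_le_pow_left₀ (pwN_nonneg _ _) hb 2
      _ = ε / 4 := by rw [div_pow, Real.sq_sqrt hε.le]; norm_num
      _ < ε := by linarith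
  · -- Riesz bounds with constant 4K
    refine ⟨4*K, by linarith, fun F c => ⟨?_, ?_⟩⟩
    · have h1 := hlowgam F c
      have hs0 : 0 ≤ Real.sqrt (∑ n ∈ F, ‖c n‖ ^ 2) := Real.sqrt_nonneg _
      have h2 : (∑ n ∈ F, ‖c n‖ ^ 2)
          ≤ 4 * K * pwN S (fun x => ∑ n ∈ F, c n * expFun (gam n) x) ^ 2 := by
        have hsq := pow_le_pow_left₀ hs0 h1 2
        rw [Real.sq_sqrt (Finset.sum_nonneg fun n _ => by positivity)] at hsq
        calc (∑ n ∈ F, ‖c n‖ ^ 2)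
            ≤ (2 * Real.sqrt K * pwN S (fun x => ∑ n ∈ F, c n * expFun (gam n) x)) ^ 2 := hsq
          _ = 4 * K * pwN S (fun x => ∑ n ∈ F, c n * expFun (gam n) x) ^ 2 := by
              rw [mul_pow, mul_pow, Real.sq_sqrt hK0.le]; ring
      calc (1 / (4*K)) * ∑ n ∈ F, ‖c n‖ ^ 2
          ≤ (1 / (4*K)) * (4 * K * pwN S (fun x => ∑ n ∈ F, c n * expFun (gam n) x) ^ 2) :=
            mul_le_mul_of_nonneg_left h2 (by positivity)
        _ = pwN S (fun x => ∑ n ∈ F, c n * expFun (gam n) x) ^ 2 := by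
            field_simp
        _ = ∫ x in S, ‖∑ n ∈ F, c n * expFun (gam n) x‖ ^ 2 := pwN_sq _ _
    · have h1 := hupgam F c
      calc ∫ x in S, ‖∑ n ∈ F, c n * expFun (gam n) x‖ ^ 2
          = pwN S (fun x => ∑ n ∈ F, c n * expFun (gam n) x) ^ 2 := (pwN_sq _ _).symm
        _ ≤ (2 * Real.sqrt K * Real.sqrt (∑ n ∈ F, ‖c n‖ ^ 2)) ^ 2 :=
            pow_le_pow_left₀ (pwN_nonneg _ _) h1 2
        _ = 4 * K * ∑ n ∈ F, ‖c n‖ ^ 2 := by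
            rw [mul_pow, mul_pow, Real.sq_sqrt hK0.le,
              Real.sq_sqrt (Finset.sum_nonneg fun n _ => by positivity)]
            ring
        _ ≤ 4*K * ∑ n ∈ F, ‖c n‖ ^ 2 := le_refl _
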